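/- Let n ≥ 1 and let e, x be integers with 0 ≤ e ≤ n and 0 ≤ x ≤ n. If x = 2m is even, then Σ_{i=0}^{n} K_e(2;i)² · K_i(2;x) = 2ⁿ · C(2m, m) · C(n−2m, e−m) (where C(a,b) = 0 if b < 0 or b > a); if x is odd, then Σ_{i=0}^{n} K_e(2;i)² · K_i(2;x) = 0. In particular, the sum equals 0 whenever x > 2e. -/
import Mathlib

open Finset
open scoped symmDiff

/-- The `q`-ary Krawtchouk polynomial `K_t(q;x)` (with parameter `n`), evaluated at a
natural number `x`. -/
def kraw (n q t x : ℕ) : ℤ :=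
  ∑ l ∈ Finset.range (t + 1),
    (-1 : ℤ) ^ l * (x.choose l) * ((n - x).choose (t - l)) * ((q : ℤ) - 1) ^ (t - l)

namespace KrawAux

variable {α : Type*} [Fintype α] [DecidableEq α]

lemma count_inter (W : Finset α) (t l : ℕ) (hl : l ≤ t) :
    ((Finset.powersetCard t (univ : Finset α)).filter fun A => (A ∩ W).card = l).card
      = W.card.choose l * Wᶜ.card.choose (t - l) := by
  rw [← Finset.card_powersetCard, ← Finset.card_powersetCard, ← Finset.card_product]
  apply Finset.card_bij' (fun A _ => (A ∩ W, A \ W)) (fun p _ => p.1 ∪ p.2)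
  · intro A hA
    simp only [mem_filter, mem_powersetCard] at hA
    obtain ⟨⟨-, hcard⟩, hint⟩ := hA
    have hsd : (A \ W).card + (A ∩ W).card = A.card := card_sdiff_add_card_inter A W
    simp only [Finset.mem_product, mem_powersetCard]
    refine ⟨⟨inter_subset_right, hint⟩, fun a ha => ?_, by omega⟩
    simp only [mem_sdiff] at ha
    simpa using ha.2
  · intro p hp
    simp only [Finset.mem_product, mem_powersetCard] at hp
    obtain ⟨⟨h1s, h1c⟩, h2s, h2c⟩ := hp
    have hdisj : Disjoint p.1 p.2 := by
      refine Finset.disjoint_left.2 fun a ha1 ha2 => ?_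
      exact (by simpa using h2s ha2 : a ∉ W) (h1s ha1)
    have h1W : p.1 ∩ W = p.1 := inter_eq_left.2 h1s
    have h2W : p.2 ∩ W = ∅ := by
      refine Finset.eq_empty_of_forall_notMem fun a ha => ?_
      simp only [mem_inter] at ha
      exact (by simpa using h2s ha.1 : a ∉ W) ha.2
    simp only [mem_filter, mem_powersetCard]
    refine ⟨⟨subset_univ _, ?_⟩, ?_⟩
    · rw [card_union_of_disjoint hdisj]; omega
    · rw [union_inter_distrib_right, h1W, h2W, union_empty, h1c]
  · intro A hA
    rw [union_comm]
    exact Finset.sdiff_union_inter A W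
  · intro p hp
    simp only [Finset.mem_product, mem_powersetCard] at hp
    obtain ⟨⟨h1s, h1c⟩, h2s, h2c⟩ := hp
    have h1W : p.1 ∩ W = p.1 := inter_eq_left.2 h1s
    have h2W : p.2 ∩ W = ∅ := by
      refine Finset.eq_empty_of_forall_notMem fun a ha => ?_
      simp only [mem_inter] at ha
      exact (by simpa using h2s ha.1 : a ∉ W) ha.2
    have h1sd : p.1 \ W = ∅ := sdiff_eq_empty_iff_subset.2 h1s
    have h2sd : p.2 \ W = p.2 := by
      refine Finset.sdiff_eq_self_iff_disjoint.2 (Finset.disjoint_left.2 fun a ha haW => ?_)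
      exact (by simpa using h2s ha : a ∉ W) haW
    ext : 1
    · simp only
      rw [union_inter_distrib_right, h1W, h2W, union_empty]
    · simp only
      rw [union_sdiff_distrib, h1sd, h2sd, empty_union]

lemma kraw_expand (n t x : ℕ) (W : Finset (Fin n)) (hW : W.card = x) :
    kraw n 2 t x
      = ∑ A ∈ Finset.powersetCard t (univ : Finset (Fin n)), (-1 : ℤ) ^ (A ∩ W).card := by
  have hmaps : ∀ A ∈ Finset.powersetCard t (univ : Finset (Fin n)),
      (A ∩ W).card ∈ Finset.range (t + 1) := by
    intro A hA
    rw [mem_powersetCard] at hA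
    rw [Finset.mem_range, Nat.lt_succ_iff]
    exact le_trans (card_le_card inter_subset_left) hA.2.le
  rw [← Finset.sum_fiberwise_of_maps_to hmaps]
  unfold kraw
  refine Finset.sum_congr rfl fun l hl => ?_
  rw [Finset.mem_range, Nat.lt_succ_iff] at hl
  have : ∀ A ∈ (Finset.powersetCard t (univ : Finset (Fin n))).filter
      (fun A => (A ∩ W).card = l), (-1 : ℤ) ^ (A ∩ W).card = (-1 : ℤ) ^ l := by
    intro A hA; rw [(Finset.mem_filter.1 hA).2]
  rw [Finset.sum_congr rfl this, Finset.sum_const, count_inter W t l hl,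
    Finset.card_compl, Fintype.card_fin, hW, nsmul_eq_mul]
  push_cast
  ring

lemma pow_card_inter_eq_prod (T V : Finset α) :
    (-1 : ℤ) ^ (T ∩ V).card = ∏ j ∈ V, (if j ∈ T then (-1 : ℤ) else 1) := by
  rw [Finset.prod_ite, Finset.prod_const, Finset.prod_const, one_pow, mul_one,
    Finset.filter_mem_eq_inter, inter_comm]

lemma chi_mul (S T V : Finset α) :
    (-1 : ℤ) ^ (S ∩ V).card * (-1 : ℤ) ^ (T ∩ V).card = (-1 : ℤ) ^ ((S ∆ T) ∩ V).card := by
  simp_rw [pow_card_inter_eq_prod, ← Finset.prod_mul_distrib]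
  refine Finset.prod_congr rfl fun j _ => ?_
  by_cases hS : j ∈ S <;> by_cases hT : j ∈ T <;>
    simp [Finset.mem_symmDiff, hS, hT]

lemma key_sum (T : Finset α) :
    ∑ V : Finset α, (-1 : ℤ) ^ (T ∩ V).card
      = if T = ∅ then 2 ^ Fintype.card α else 0 := by
  simp_rw [pow_card_inter_eq_prod]
  have hp := Finset.prod_add (fun j => if j ∈ T then (-1 : ℤ) else 1)
    (fun _ => (1 : ℤ)) (univ : Finset α)
  simp only [Finset.prod_const_one, mul_one, Finset.powerset_univ] at hp
  rw [← hp]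
  have h2 : ∀ j ∈ (univ : Finset α),
      ((if j ∈ T then (-1 : ℤ) else 1) + 1) = (if j ∈ T then 0 else 2) := by
    intro j _; split <;> norm_num
  rw [Finset.prod_congr rfl h2]
  by_cases hT : T = ∅
  · simp [hT, Finset.prod_const, Finset.card_univ]
  · rw [if_neg hT]
    obtain ⟨a, ha⟩ := Finset.nonempty_iff_ne_empty.2 hT
    exact Finset.prod_eq_zero (Finset.mem_univ a) (by simp [ha])

lemma main_count (n e x : ℕ) (W : Finset (Fin n)) (hW : W.card = x) :
    ∑ i ∈ Finset.range (n + 1), (kraw n 2 e i) ^ 2 * kraw n 2 i x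
      = 2 ^ n * ((Finset.powersetCard e (univ : Finset (Fin n))).filter
          (fun U => (U ∆ W).card = e)).card := by
  set Pe := Finset.powersetCard e (univ : Finset (Fin n)) with hPe
  set G : Finset (Fin n) → ℤ :=
    fun V => (∑ U ∈ Pe, (-1 : ℤ) ^ (U ∩ V).card) ^ 2 * (-1 : ℤ) ^ (V ∩ W).card with hG
  have hmaps : ∀ V ∈ (univ : Finset (Finset (Fin n))), V.card ∈ Finset.range (n + 1) := by
    intro V _
    rw [Finset.mem_range, Nat.lt_succ_iff]
    simpa using Finset.card_le_card (Finset.subset_univ V)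
  have hfilt : ∀ i, (univ : Finset (Finset (Fin n))).filter (fun V => V.card = i)
      = Finset.powersetCard i (univ : Finset (Fin n)) := by
    intro i; ext V; simp [mem_powersetCard]
  have step1 : ∑ i ∈ Finset.range (n + 1), (kraw n 2 e i) ^ 2 * kraw n 2 i x
      = ∑ V : Finset (Fin n), G V := by
    rw [← Finset.sum_fiberwise_of_maps_to hmaps G]
    refine Finset.sum_congr rfl fun i _ => ?_
    rw [hfilt i, kraw_expand n i x W hW, Finset.mul_sum]
    refine Finset.sum_congr rfl fun V hV => ?_
    have hVc : V.card = i := (mem_powersetCard.1 hV).2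
    rw [← hVc, kraw_expand n e V.card V rfl]
  have step2 : ∀ V, G V = ∑ U1 ∈ Pe, ∑ U2 ∈ Pe,
      (-1 : ℤ) ^ (((U1 ∆ U2) ∆ W) ∩ V).card := by
    intro V
    rw [hG]
    simp only
    rw [pow_two, Finset.sum_mul_sum, Finset.sum_mul]
    refine Finset.sum_congr rfl fun U1 _ => ?_
    rw [Finset.sum_mul]
    refine Finset.sum_congr rfl fun U2 _ => ?_
    rw [Finset.inter_comm V W, chi_mul, chi_mul]
  rw [step1]
  simp_rw [step2]
  rw [Finset.sum_comm]
  have step3 : ∀ U1 ∈ Pe, (∑ V : Finset (Fin n), ∑ U2 ∈ Pe,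
      (-1 : ℤ) ^ (((U1 ∆ U2) ∆ W) ∩ V).card)
      = ∑ U2 ∈ Pe, if U2 = U1 ∆ W then (2 : ℤ) ^ n else 0 := by
    intro U1 _
    rw [Finset.sum_comm]
    refine Finset.sum_congr rfl fun U2 _ => ?_
    rw [key_sum, Fintype.card_fin]
    have hiff : (U1 ∆ U2 ∆ W = ∅) ↔ (U2 = U1 ∆ W) := by
      rw [Finset.symmDiff_eq_empty]
      constructor
      · intro h
        rw [← h, symmDiff_symmDiff_cancel_left]
      · intro h
        rw [h, symmDiff_symmDiff_cancel_left]
    rw [if_congr hiff rfl rfl]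
  rw [Finset.sum_congr rfl step3]
  have step4 : ∀ U1 ∈ Pe, (∑ U2 ∈ Pe, if U2 = U1 ∆ W then (2 : ℤ) ^ n else 0)
      = if (U1 ∆ W).card = e then (2 : ℤ) ^ n else 0 := by
    intro U1 _
    rw [Finset.sum_ite_eq' Pe (U1 ∆ W) (fun _ => (2 : ℤ) ^ n)]
    congr 1
    rw [hPe, mem_powersetCard]
    simp
  rw [Finset.sum_congr rfl step4, Finset.sum_ite, Finset.sum_const, Finset.sum_const_zero,
    add_zero, nsmul_eq_mul, mul_comm]

lemma card_symmDiff_eq (U W : Finset α) :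
    (U ∆ W).card = (U.card - (U ∩ W).card) + (W.card - (W ∩ U).card) := by
  have h1 : (U \ W).card + (U ∩ W).card = U.card := card_sdiff_add_card_inter U W
  have h2 : (W \ U).card + (W ∩ U).card = W.card := card_sdiff_add_card_inter W U
  rw [symmDiff_def, sup_eq_union, card_union_of_disjoint (disjoint_sdiff_sdiff)]
  omega

lemma final_count (n e : ℕ) (W : Finset (Fin n)) :
    ∀ m : ℕ, W.card = 2 * m →
    (((Finset.powersetCard e (univ : Finset (Fin n))).filter
        (fun U => (U ∆ W).card = e)).card : ℤ)
      = if m ≤ e then ((2 * m).choose m : ℤ) * ((n - 2 * m).choose (e - m)) else 0 := by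
  intro m hW
  have hcond : ∀ U ∈ Finset.powersetCard e (univ : Finset (Fin n)),
      ((U ∆ W).card = e ↔ (U ∩ W).card = m ∧ m ≤ e) := by
    intro U hU
    have hUc : U.card = e := (mem_powersetCard.1 hU).2
    have hk1 : (U ∩ W).card ≤ e := hUc ▸ card_le_card inter_subset_left
    have hk2 : (W ∩ U).card ≤ 2 * m := hW ▸ card_le_card inter_subset_left
    have hk3 : (U ∩ W).card = (W ∩ U).card := by rw [inter_comm]
    rw [card_symmDiff_eq, hUc, hW]
    omega
  rw [Finset.filter_congr hcond]
  by_cases hm : m ≤ e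
  · have : (Finset.powersetCard e (univ : Finset (Fin n))).filter
        (fun U => (U ∩ W).card = m ∧ m ≤ e)
        = (Finset.powersetCard e (univ : Finset (Fin n))).filter
        (fun U => (U ∩ W).card = m) := by
      apply Finset.filter_congr; intro U _; simp [hm]
    rw [this, if_pos hm, count_inter W e m hm, Finset.card_compl, Fintype.card_fin, hW]
    push_cast
    ring
  · have : (Finset.powersetCard e (univ : Finset (Fin n))).filter
        (fun U => (U ∩ W).card = m ∧ m ≤ e) = ∅ := by
      apply Finset.filter_false_of_mem; intro U _; simp [hm]
    rw [this, if_neg hm]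
    simp

lemma final_count_odd (n e x : ℕ) (W : Finset (Fin n)) (hW : W.card = x) (hx : Odd x) :
    (((Finset.powersetCard e (univ : Finset (Fin n))).filter
        (fun U => (U ∆ W).card = e)).card : ℤ) = 0 := by
  have : (Finset.powersetCard e (univ : Finset (Fin n))).filter
      (fun U => (U ∆ W).card = e) = ∅ := by
    apply Finset.filter_false_of_mem
    intro U hU
    have hUc : U.card = e := (mem_powersetCard.1 hU).2
    have hk1 : (U ∩ W).card ≤ e := hUc ▸ card_le_card inter_subset_left
    have hk2 : (W ∩ U).card ≤ x := hW ▸ card_le_card inter_subset_left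
    have hk3 : (U ∩ W).card = (W ∩ U).card := by rw [inter_comm]
    rw [card_symmDiff_eq, hUc, hW]
    obtain ⟨r, hr⟩ := hx
    omega
  rw [this]
  simp

end KrawAux

/-- Evaluation of the binary polynomial `F_e` (with Krawtchouk coefficients
`f_i = K_e(2;i)²`): for even `x = 2m`,
`∑_{i=0}^n K_e(2;i)² K_i(2;x) = 2ⁿ C(2m,m) C(n-2m,e-m)` (zero if `m > e`),
and the sum vanishes for odd `x`.  In particular it is `0` whenever `x > 2e`. -/
theorem F_e_evaluation_binary (n e x : ℕ) (hn : 1 ≤ n) (he : e ≤ n) (hx : x ≤ n) :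
    (∀ m : ℕ, x = 2 * m →
      ∑ i ∈ Finset.range (n + 1), (kraw n 2 e i) ^ 2 * kraw n 2 i x
        = if m ≤ e then
            (2 : ℤ) ^ n * ((2 * m).choose m) * ((n - 2 * m).choose (e - m))
          else 0) ∧
    (Odd x → ∑ i ∈ Finset.range (n + 1), (kraw n 2 e i) ^ 2 * kraw n 2 i x = 0) ∧
    (2 * e < x → ∑ i ∈ Finset.range (n + 1), (kraw n 2 e i) ^ 2 * kraw n 2 i x = 0) := by
  obtain ⟨W, -, hW⟩ : ∃ W ⊆ (univ : Finset (Fin n)), W.card = x :=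
    Finset.exists_subset_card_eq (by simpa using hx)
  have h1 : ∀ m : ℕ, x = 2 * m →
      ∑ i ∈ Finset.range (n + 1), (kraw n 2 e i) ^ 2 * kraw n 2 i x
        = if m ≤ e then
            (2 : ℤ) ^ n * ((2 * m).choose m) * ((n - 2 * m).choose (e - m))
          else 0 := by
    intro m hm
    rw [KrawAux.main_count n e x W hW, KrawAux.final_count n e W m (hm ▸ hW)]
    split_ifs with h
    · ring
    · ring
  have h2 : Odd x → ∑ i ∈ Finset.range (n + 1), (kraw n 2 e i) ^ 2 * kraw n 2 i x = 0 := by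
    intro hodd
    rw [KrawAux.main_count n e x W hW, KrawAux.final_count_odd n e x W hW hodd]
    ring
  refine ⟨h1, h2, ?_⟩
  intro hlt
  rcases Nat.even_or_odd x with ⟨m, hm⟩ | hodd
  · have hm' : x = 2 * m := by omega
    rw [h1 m hm', if_neg (by omega)]
  · exact h2 hodd
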